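/- Let X ⊆ ℝ^m and let F = (X; f_1, …, f_N) be an IFS of continuous self-maps of X with a coding map π : {1,…,N}^∞ → X that is surjective onto X. Then F is point-fibred on X: for every σ ∈ {1,…,N}^∞ and every x ∈ X, lim_{k→∞} f_{σ_1}∘⋯∘f_{σ_k}(x) = π(σ). -/

import Mathlib

/-- `ifsComp f σ k x = f_{σ 0} ∘ f_{σ 1} ∘ ⋯ ∘ f_{σ (k-1)} (x)`. -/
def ifsComp {E : Type*} {N : ℕ} (f : Fin N → E → E) (σ : ℕ → Fin N) : ℕ → E → E
  | 0, x => x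
  | k + 1, x => ifsComp f σ k (f (σ k) x)

/-- The inverse shift `s_n`, prepending the symbol `n` to a sequence. -/
def prependSymbol {N : ℕ} (n : Fin N) (σ : ℕ → Fin N) : ℕ → Fin N
  | 0 => n
  | k + 1 => σ k

/-- Append `k` initial symbols of `σ` before `τ`. -/
def appendCode {N : ℕ} (σ : ℕ → Fin N) (k : ℕ) (τ : ℕ → Fin N) : ℕ → Fin N :=
  fun i => if i < k then σ i else τ (i - k)

lemma appendCode_succ {N : ℕ} (σ : ℕ → Fin N) (k : ℕ) (τ : ℕ → Fin N) :
    appendCode σ k (prependSymbol (σ k) τ) = appendCode σ (k + 1) τ := by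
  funext i
  unfold appendCode
  rcases lt_trichotomy i k with h | h | h
  · simp [h, h.trans (Nat.lt_succ_self k)]
  · subst h
    simp [prependSymbol, Nat.lt_succ_self]
  · have h1 : ¬ i < k := not_lt.2 h.le
    have h2 : ¬ i < k + 1 := not_lt.2 h
    obtain ⟨j, rfl⟩ := Nat.exists_eq_add_of_lt h
    simp only [h1, h2, if_false]
    have : k + j + 1 - k = j + 1 := by omega
    rw [this]
    have : k + j + 1 - (k + 1) = j := by omega
    rw [this, prependSymbol]

lemma ifsComp_pi {N m : ℕ} (f : Fin N → EuclideanSpace ℝ (Fin m) → EuclideanSpace ℝ (Fin m))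
    (π : (ℕ → Fin N) → EuclideanSpace ℝ (Fin m))
    (hπ_comm : ∀ (n : Fin N) (σ : ℕ → Fin N), f n (π σ) = π (prependSymbol n σ))
    (σ : ℕ → Fin N) : ∀ (k : ℕ) (τ : ℕ → Fin N),
    ifsComp f σ k (π τ) = π (appendCode σ k τ) := by
  intro k
  induction k with
  | zero => intro τ; show π τ = π (appendCode σ 0 τ); congr 1
  | succ k ih =>
    intro τ
    rw [ifsComp, hπ_comm, ih, appendCode_succ]

theorem surjective_coding_map_implies_point_fibred (m N : ℕ)
    (X : Set (EuclideanSpace ℝ (Fin m)))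
    (f : Fin N → EuclideanSpace ℝ (Fin m) → EuclideanSpace ℝ (Fin m))
    (hf_maps : ∀ n, Set.MapsTo (f n) X X)
    (hf_cont : ∀ n, ContinuousOn (f n) X)
    (π : (ℕ → Fin N) → EuclideanSpace ℝ (Fin m))
    (hπ_cont : Continuous π)
    (hπ_comm : ∀ (n : Fin N) (σ : ℕ → Fin N), f n (π σ) = π (prependSymbol n σ))
    (hπ_surj : Set.range π = X) :
    ∀ (σ : ℕ → Fin N), ∀ x ∈ X,
      Filter.Tendsto (fun k => ifsComp f σ k x) Filter.atTop (nhds (π σ)) := by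
  intro σ x hx
  rw [← hπ_surj] at hx
  obtain ⟨τ, rfl⟩ := hx
  have hrw : ∀ k, ifsComp f σ k (π τ) = π (appendCode σ k τ) :=
    fun k => ifsComp_pi f π hπ_comm σ k τ
  have hcode : Filter.Tendsto (fun k => appendCode σ k τ) Filter.atTop (nhds σ) := by
    rw [tendsto_pi_nhds]
    intro i
    apply Filter.Tendsto.congr' (f₁ := fun _ => σ i)
    · filter_upwards [Filter.eventually_ge_atTop (i + 1)] with k hk
      simp [appendCode, Nat.lt_of_succ_le hk]
    · exact tendsto_const_nhds
  simpa only [hrw, Function.comp_def] using (hπ_cont.tendsto σ).comp hcode
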